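/- With K an omega-Dini Calderon-Zygmund convolution kernel as above, for every k in Z and every xi with |2^k xi| > 1, the Fourier transform of K^k = K chi_{|.| > 2^k} satisfies |hat{K^k}(xi)| <= c_n ( C_K |2^k xi|^{-1} + ||omega^{1/2}||_Dini * omega(|2^k xi|^{-1})^{1/2} ). -/

import Mathlib

open MeasureTheory Real
open scoped ENNReal RealInnerProductSpace

noncomputable section

/-- The Dini norm `‖g‖_Dini = ∫₀¹ g(t) dt/t`. -/
def diniNorm (g : ℝ → ℝ) : ℝ := ∫ t in Set.Ioo (0 : ℝ) 1, g t / t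



lemma pow_sub_pow_le' (a b : ℝ) (hb : 0 ≤ b) (hba : b ≤ a) :
    ∀ m : ℕ, a ^ (m + 1) - b ^ (m + 1) ≤ (m + 1) * a ^ m * (a - b) := by
  intro m
  induction m with
  | zero => simp
  | succ m ih =>
      have ha : 0 ≤ a := hb.trans hba
      have h1 : b ^ (m+1) ≤ a ^ (m+1) := pow_le_pow_left₀ hb hba _
      have h2 : a * (a ^ (m+1) - b ^ (m+1)) ≤ a * ((m + 1) * a ^ m * (a - b)) :=
        mul_le_mul_of_nonneg_left ih ha
      have h4 : b ^ (m+1) * (a - b) ≤ a ^ (m+1) * (a - b) :=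
        mul_le_mul_of_nonneg_right h1 (by linarith)
      have h3 : a ^ (m+2) - b ^ (m+2) = a * (a ^ (m+1) - b ^ (m+1)) + b ^ (m+1) * (a - b) := by
        ring
      have h5 : a * ((↑m + 1) * a ^ m * (a - b)) = (↑m + 1) * a ^ (m+1) * (a - b) := by ring
      have key : a ^ (m+2) - b ^ (m+2) ≤ ((m:ℝ) + 2) * a ^ (m+1) * (a - b) := by
        rw [h3]; nlinarith [pow_nonneg ha (m+1)]
      push_cast
      push_cast at key
      calc a ^ (m + 2) - b ^ (m + 2) ≤ ((m:ℝ) + 2) * a ^ (m+1) * (a - b) := key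
        _ = ((m:ℝ) + 1 + 1) * a ^ (m+1) * (a - b) := by ring


-- each dyadic term bounded by a Dini-type integral
lemma omega_step (ω : ℝ → ℝ) (hpos : ∀ t, 0 ≤ t → 0 ≤ ω t)
    (hmono : ∀ u t, 0 ≤ u → u ≤ t → ω u ≤ ω t)
    (hsub2 : ∀ t, 0 ≤ t → ω (2 * t) ≤ 2 * ω t)
    (hint : IntegrableOn (fun t => ω t / t) (Set.Ioo (0 : ℝ) 1))
    (b : ℝ) (hb : 0 < b) (hb1 : b < 1) :
    ω b ≤ (2 / Real.log 2) * ∫ t in Set.Ioc (b/2) b, ω t / t := by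
  have hlog : (0:ℝ) < Real.log 2 := Real.log_pos (by norm_num)
  have hIcc : Set.Ioc (b/2) b ⊆ Set.Ioo (0:ℝ) 1 := by
    intro t ht
    exact ⟨lt_trans (by linarith) ht.1, lt_of_le_of_lt ht.2 hb1⟩
  have hi1 : IntegrableOn (fun t => ω b / 2 * t⁻¹) (Set.Ioc (b/2) b) := by
    apply Integrable.const_mul
    have : IntegrableOn (fun t : ℝ => t⁻¹) (Set.Icc (b/2) b) := by
      apply ContinuousOn.integrableOn_Icc
      apply ContinuousOn.inv₀ continuousOn_id
      intro t ht
      have h1 := ht.1; intro h0; simp only [id] at h0; rw [h0] at h1; linarith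
    exact this.mono_set Set.Ioc_subset_Icc_self
  have hi2 : IntegrableOn (fun t => ω t / t) (Set.Ioc (b/2) b) := hint.mono_set hIcc
  have hmon : ∫ t in Set.Ioc (b/2) b, ω b / 2 * t⁻¹ ≤ ∫ t in Set.Ioc (b/2) b, ω t / t := by
    apply setIntegral_mono_on hi1 hi2 measurableSet_Ioc
    intro t ht
    have ht0 : 0 < t := by have := ht.1; linarith
    have h1 : ω b ≤ 2 * ω t := by
      have : ω b ≤ ω (2 * t) := hmono b (2*t) hb.le (by linarith [ht.1])
      have h2 := hsub2 t ht0.le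
      linarith
    rw [div_eq_mul_inv (ω t) t]
    apply mul_le_mul_of_nonneg_right _ (inv_nonneg.mpr ht0.le)
    linarith
  have hval : ∫ t in Set.Ioc (b/2) b, (t:ℝ)⁻¹ = Real.log 2 := by
    rw [← intervalIntegral.integral_of_le (by linarith : b/2 ≤ b), integral_inv]
    · congr 1
      field_simp
    · intro h
      rw [Set.uIcc_of_le (by linarith : b/2 ≤ b)] at h
      have := h.1; linarith
  have hval2 : ∫ t in Set.Ioc (b/2) b, ω b / 2 * t⁻¹ = ω b / 2 * Real.log 2 := by
    rw [integral_const_mul, hval]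
  rw [hval2] at hmon
  calc ω b = (2 / Real.log 2) * (ω b / 2 * Real.log 2) := by field_simp
    _ ≤ (2 / Real.log 2) * ∫ t in Set.Ioc (b/2) b, ω t / t := by
        apply mul_le_mul_of_nonneg_left hmon (by positivity)

lemma sqrt_integral_sum (ω : ℝ → ℝ)
    (hints : IntegrableOn (fun t => Real.sqrt (ω t) / t) (Set.Ioo (0 : ℝ) 1))
    (δ : ℝ) (hδ0 : 0 < δ) (hδ1 : δ < 1) (N : ℕ) :
    ∑ j ∈ Finset.range N, ∫ t in Set.Ioc (δ * (2:ℝ)⁻¹ ^ j / 2) (δ * (2:ℝ)⁻¹ ^ j),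
        Real.sqrt (ω t) / t
      = ∫ t in Set.Ioc (δ * (2:ℝ)⁻¹ ^ N) δ, Real.sqrt (ω t) / t := by
  induction N with
  | zero => simp
  | succ N ih =>
      have hsub : ∀ M : ℕ, Set.Ioc (δ * (2:ℝ)⁻¹ ^ M / 2) (δ * (2:ℝ)⁻¹ ^ M) ⊆ Set.Ioo (0:ℝ) 1 := by
        intro M t ht
        have h1 : (0:ℝ) < δ * (2:ℝ)⁻¹ ^ M / 2 := by positivity
        have h2 : δ * (2:ℝ)⁻¹ ^ M ≤ δ := by
          apply mul_le_of_le_one_right hδ0.le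
          apply pow_le_one₀ (by norm_num) (by norm_num)
        exact ⟨lt_trans h1 ht.1, lt_of_le_of_lt (le_trans ht.2 h2) hδ1⟩
      have hstep : δ * (2:ℝ)⁻¹ ^ (N+1) = δ * (2:ℝ)⁻¹ ^ N / 2 := by ring
      rw [Finset.sum_range_succ, ih, hstep]
      have hp : (0:ℝ) < δ * (2:ℝ)⁻¹ ^ N := by positivity
      have hle1 : δ * (2:ℝ)⁻¹ ^ N / 2 ≤ δ * (2:ℝ)⁻¹ ^ N := by linarith
      have hle2 : δ * (2:ℝ)⁻¹ ^ N ≤ δ := by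
        apply mul_le_of_le_one_right hδ0.le
        apply pow_le_one₀ (by norm_num) (by norm_num)
      rw [add_comm]
      rw [← setIntegral_union ?hdisj measurableSet_Ioc ?hi1 ?hi2]
      · rw [Set.Ioc_union_Ioc_eq_Ioc hle1 hle2]
      case hdisj =>
        rw [Set.disjoint_left]
        intro t ht1 ht2
        exact absurd ht2.1 (not_lt.mpr ht1.2)
      case hi1 => exact hints.mono_set (hsub N)
      case hi2 =>
        apply hints.mono_set
        intro t ht
        exact ⟨lt_trans hp ht.1, lt_of_le_of_lt ht.2 hδ1⟩

lemma series_bound (ω : ℝ → ℝ) (hpos : ∀ t, 0 ≤ t → 0 ≤ ω t)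
    (hmono : ∀ u t, 0 ≤ u → u ≤ t → ω u ≤ ω t)
    (hsub2 : ∀ t, 0 ≤ t → ω (2 * t) ≤ 2 * ω t)
    (hint : IntegrableOn (fun t => ω t / t) (Set.Ioo (0 : ℝ) 1))
    (hints : IntegrableOn (fun t => Real.sqrt (ω t) / t) (Set.Ioo (0 : ℝ) 1))
    (δ r : ℝ) (hδ0 : 0 < δ) (hδr : δ ≤ r) (hr1 : r < 1) (N : ℕ) :
    ∑ j ∈ Finset.range N, ω (δ * (2:ℝ)⁻¹ ^ j)
      ≤ (2 / Real.log 2) * (Real.sqrt (ω r) * diniNorm (fun t => Real.sqrt (ω t))) := by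
  have hδ1 : δ < 1 := lt_of_le_of_lt hδr hr1
  have hb : ∀ j : ℕ, 0 < δ * (2:ℝ)⁻¹ ^ j := fun j => by positivity
  have hble : ∀ j : ℕ, δ * (2:ℝ)⁻¹ ^ j ≤ δ := fun j => by
    apply mul_le_of_le_one_right hδ0.le
    apply pow_le_one₀ (by norm_num) (by norm_num)
  have hsubI : ∀ j : ℕ, Set.Ioc (δ * (2:ℝ)⁻¹ ^ j / 2) (δ * (2:ℝ)⁻¹ ^ j) ⊆ Set.Ioo (0:ℝ) 1 := by
    intro j t ht
    have h1 : (0:ℝ) < δ * (2:ℝ)⁻¹ ^ j / 2 := by positivity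
    exact ⟨lt_trans h1 ht.1, lt_of_le_of_lt (le_trans ht.2 (hble j)) hδ1⟩
  -- step 1+2 for each j
  have hstep : ∀ j : ℕ, ω (δ * (2:ℝ)⁻¹ ^ j) ≤ (2 / Real.log 2) * (Real.sqrt (ω r) *
      ∫ t in Set.Ioc (δ * (2:ℝ)⁻¹ ^ j / 2) (δ * (2:ℝ)⁻¹ ^ j), Real.sqrt (ω t) / t) := by
    intro j
    set b := δ * (2:ℝ)⁻¹ ^ j with hbdef
    have h1 : ω b ≤ (2 / Real.log 2) * ∫ t in Set.Ioc (b/2) b, ω t / t :=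
      omega_step ω hpos hmono hsub2 hint b (hb j) (lt_of_le_of_lt (hble j) hδ1)
    have h2 : ∫ t in Set.Ioc (b/2) b, ω t / t
        ≤ Real.sqrt (ω r) * ∫ t in Set.Ioc (b/2) b, Real.sqrt (ω t) / t := by
      rw [← integral_const_mul]
      apply setIntegral_mono_on (hint.mono_set (hsubI j))
        ((hints.mono_set (hsubI j)).const_mul _) measurableSet_Ioc
      intro t ht
      have ht0 : 0 < t := by have := (hsubI j ht).1; linarith
      have hωt : 0 ≤ ω t := hpos t ht0.le
      have htr : ω t ≤ ω r := hmono t r ht0.le (le_trans (le_trans ht.2 (hble j)) hδr)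
      have hs : Real.sqrt (ω t) ≤ Real.sqrt (ω r) := Real.sqrt_le_sqrt htr
      calc ω t / t = Real.sqrt (ω t) * Real.sqrt (ω t) / t := by rw [Real.mul_self_sqrt hωt]
        _ ≤ Real.sqrt (ω r) * Real.sqrt (ω t) / t := by
            gcongr
        _ = Real.sqrt (ω r) * (Real.sqrt (ω t) / t) := by ring
    calc ω b ≤ (2 / Real.log 2) * ∫ t in Set.Ioc (b/2) b, ω t / t := h1
      _ ≤ _ := by
          apply mul_le_mul_of_nonneg_left h2
          positivity
  calc ∑ j ∈ Finset.range N, ω (δ * (2:ℝ)⁻¹ ^ j)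
      ≤ ∑ j ∈ Finset.range N, (2 / Real.log 2) * (Real.sqrt (ω r) *
          ∫ t in Set.Ioc (δ * (2:ℝ)⁻¹ ^ j / 2) (δ * (2:ℝ)⁻¹ ^ j), Real.sqrt (ω t) / t) :=
        Finset.sum_le_sum fun j _ => hstep j
    _ = (2 / Real.log 2) * (Real.sqrt (ω r) *
          ∑ j ∈ Finset.range N, ∫ t in Set.Ioc (δ * (2:ℝ)⁻¹ ^ j / 2) (δ * (2:ℝ)⁻¹ ^ j),
            Real.sqrt (ω t) / t) := by
        rw [Finset.mul_sum]
        congr 1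
        rw [Finset.mul_sum]
    _ ≤ _ := by
        rw [sqrt_integral_sum ω hints δ hδ0 hδ1 N]
        apply mul_le_mul_of_nonneg_left _ (by positivity)
        apply mul_le_mul_of_nonneg_left _ (Real.sqrt_nonneg _)
        unfold diniNorm
        apply setIntegral_mono_set hints
        · filter_upwards [self_mem_ae_restrict measurableSet_Ioo] with t ht
          exact div_nonneg (Real.sqrt_nonneg _) (le_of_lt ht.1)
        · apply HasSubset.Subset.eventuallyLE
          intro t ht
          exact ⟨lt_trans (hb N) ht.1, lt_of_le_of_lt ht.2 hδ1⟩


set_option maxHeartbeats 2000000 in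
/-- for an `ω`-Dini Calderón–Zygmund convolution kernel with annulus
cancellation, the Fourier transform of `K^k = K χ_{{|x| > 2^k}}` satisfies, for `|2^k ξ| > 1`,
`|K^k^(ξ)| ≤ c_n (C_K |2^k ξ|⁻¹ + ‖ω^{1/2}‖_Dini ω(|2^k ξ|⁻¹)^{1/2})`. -/
theorem truncated_fourier_decay (n : ℕ) (hn : 1 ≤ n) :
    ∃ c : ℝ, 0 < c ∧
      ∀ (K : EuclideanSpace ℝ (Fin n) → ℂ) (C_K : ℝ) (ω : ℝ → ℝ), 0 < C_K →
        (∀ t, 0 ≤ t → 0 ≤ ω t) → ω 0 = 0 →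
        (∀ u t s, 0 ≤ u → 0 ≤ t → 0 ≤ s → u ≤ t + s → ω u ≤ ω t + ω s) →
        IntegrableOn (fun t => ω t / t) (Set.Ioo (0 : ℝ) 1) →
        IntegrableOn (fun t => Real.sqrt (ω t) / t) (Set.Ioo (0 : ℝ) 1) →
        (∀ x : EuclideanSpace ℝ (Fin n), x ≠ 0 → ‖K x‖ ≤ C_K / ‖x‖ ^ n) →
        (∀ x y : EuclideanSpace ℝ (Fin n), x ≠ 0 → 2 * ‖y‖ ≤ ‖x‖ →
          ‖K (x - y) - K x‖ ≤ ω (‖y‖ / ‖x‖) / ‖x‖ ^ n) →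
        (∀ ε R : ℝ, 0 < ε → ε < R →
          ∫ x in {x : EuclideanSpace ℝ (Fin n) | ε < ‖x‖ ∧ ‖x‖ < R}, K x = 0) →
        ∀ (k : ℤ) (ξ : EuclideanSpace ℝ (Fin n)), 1 < (2 : ℝ) ^ k * ‖ξ‖ →
          ‖∫ x in {x : EuclideanSpace ℝ (Fin n) | (2 : ℝ) ^ k < ‖x‖},
              K x * Complex.exp (-(2 * π * Complex.I) * (⟪x, ξ⟫ : ℝ))‖ ≤
            c * (C_K * ((2 : ℝ) ^ k * ‖ξ‖)⁻¹ +
              diniNorm (fun t => Real.sqrt (ω t)) *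
                Real.sqrt (ω (((2 : ℝ) ^ k * ‖ξ‖)⁻¹))) := by
  classical
  obtain ⟨m, rfl⟩ : ∃ m, n = m + 1 := ⟨n - 1, (Nat.succ_pred_eq_of_pos hn).symm⟩
  set n := m + 1
  set E := EuclideanSpace ℝ (Fin n)
  set v : ℝ≥0∞ := volume (Metric.ball (0 : E) 1) with hvdef
  have hvfin : v ≠ ∞ := measure_ball_lt_top.ne
  set V : ℝ := v.toReal with hVdef
  have hV0 : 0 ≤ V := ENNReal.toReal_nonneg
  refine ⟨(V + 1) * ((n : ℝ) * 2 ^ n + 4 ^ n * 4), ?_, ?_⟩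
  · apply mul_pos (by linarith)
    have : (0:ℝ) < 4 ^ n * 4 := by positivity
    have : (0:ℝ) ≤ (n : ℝ) * 2 ^ n := by positivity
    linarith
  intro K C_K ω hCK hω0 hωzero hωsub hint hints hsize hsmooth _hcancel k ξ hr
  set c : ℝ := (V + 1) * ((n : ℝ) * 2 ^ n + 4 ^ n * 4) with hcdef
  have hc : 0 < c := by
    apply mul_pos (by linarith)
    have h1 : (0:ℝ) < 4 ^ n * 4 := by positivity
    have h2 : (0:ℝ) ≤ (n : ℝ) * 2 ^ n := by positivity
    linarith
  set D : ℝ := diniNorm (fun t => Real.sqrt (ω t)) with hDdef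
  have hD : 0 ≤ D := by
    apply setIntegral_nonneg measurableSet_Ioo
    intro t ht
    exact div_nonneg (Real.sqrt_nonneg _) ht.1.le
  set r : ℝ := (2 : ℝ) ^ k * ‖ξ‖ with hrdef
  have hP : (0:ℝ) < (2:ℝ) ^ k := zpow_pos (by norm_num) k
  set P : ℝ := (2:ℝ) ^ k with hPdef
  have hr0 : (0:ℝ) < r := lt_trans one_pos hr
  have hξ0 : (0:ℝ) < ‖ξ‖ := by
    rcases lt_or_ge 0 ‖ξ‖ with h | h
    · exact h
    · exfalso; nlinarith
  -- ω is monotone and doubling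
  have hmono : ∀ u t : ℝ, 0 ≤ u → u ≤ t → ω u ≤ ω t := by
    intro u t hu hut
    have := hωsub u t 0 hu (hu.trans hut) le_rfl (by linarith)
    rw [hωzero] at this; linarith
  have hsub2 : ∀ t : ℝ, 0 ≤ t → ω (2 * t) ≤ 2 * ω t := by
    intro t ht
    have := hωsub (2*t) t t (by linarith) ht ht (by linarith)
    linarith
  have hRHS0 : 0 ≤ c * (C_K * r⁻¹ + D * Real.sqrt (ω r⁻¹)) := by
    apply mul_nonneg hc.le
    apply add_nonneg (mul_nonneg hCK.le (by positivity)) (mul_nonneg hD (Real.sqrt_nonneg _))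
  set S : Set E := {x : E | P < ‖x‖} with hSdef
  have hS : MeasurableSet S := by
    have : S = (fun x : E => ‖x‖) ⁻¹' Set.Ioi P := rfl
    rw [this]; exact measurable_norm measurableSet_Ioi
  set f : E → ℂ := fun x => K x * Complex.exp (-(2 * π * Complex.I) * ((⟪x, ξ⟫ : ℝ) : ℂ)) with hfdef
  by_cases hInt : IntegrableOn f S volume
  case neg =>
    rw [integral_undef hInt, norm_zero]
    exact hRHS0
  case pos =>
  set z : E := ((2 * ‖ξ‖ ^ 2)⁻¹) • ξ with hzdef
  have hznorm : ‖z‖ = (2 * ‖ξ‖)⁻¹ := by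
    rw [hzdef, norm_smul, Real.norm_eq_abs, abs_of_pos (by positivity)]
    field_simp
  have hz0 : 0 < ‖z‖ := by rw [hznorm]; positivity
  have hzP : 2 * ‖z‖ < P := by
    rw [hznorm]
    have h1 : ‖ξ‖⁻¹ * ‖ξ‖ = 1 := inv_mul_cancel₀ hξ0.ne'
    have h2 : 2 * (2 * ‖ξ‖)⁻¹ = ‖ξ‖⁻¹ := by field_simp
    rw [h2]
    nlinarith [hr, hP]
  have hinner : ∀ x : E, (⟪x + z, ξ⟫ : ℝ) = ⟪x, ξ⟫ + 1/2 := by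
    intro x
    rw [inner_add_left, hzdef, real_inner_smul_left, real_inner_self_eq_norm_sq]
    have : ‖ξ‖ ^ 2 ≠ 0 := by positivity
    field_simp
  set e : E → ℂ := fun x => Complex.exp (-(2 * π * Complex.I) * ((⟪x, ξ⟫ : ℝ) : ℂ)) with hedef
  have henorm : ∀ x : E, ‖e x‖ = 1 := by
    intro x
    simp only [hedef]
    have harg : -(2 * π * Complex.I) * ((⟪x, ξ⟫ : ℝ) : ℂ)
        = ((-(2 * π * ⟪x, ξ⟫) : ℝ) : ℂ) * Complex.I := by push_cast; ring
    rw [harg]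
    exact Complex.norm_exp_ofReal_mul_I _
  have heshift : ∀ x : E, e (x + z) = - e x := by
    intro x
    simp only [hedef]
    rw [hinner x]
    have : (-(2 * π * Complex.I) * (((⟪x, ξ⟫ : ℝ) + 1/2 : ℝ) : ℂ))
        = -(2 * π * Complex.I) * ((⟪x, ξ⟫ : ℝ) : ℂ) + (-(π * Complex.I)) := by
      push_cast; ring
    rw [this, Complex.exp_add]
    have hexp : Complex.exp (-(π * Complex.I)) = -1 := by
      rw [Complex.exp_neg, Complex.exp_pi_mul_I]
      norm_num
    rw [hexp]
    ring
  set φ : E → ℂ := S.indicator f with hφdef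
  have hφ : Integrable φ := (integrable_indicator_iff hS).2 hInt
  set g : E → ℂ := fun x => φ x + φ (x + z) with hgdef
  have hg : Integrable g := hφ.add (hφ.comp_add_right z)
  have hIg : ∫ x, g x = 2 * ∫ x in S, f x := by
    rw [hgdef]
    rw [integral_add hφ (hφ.comp_add_right z), integral_add_right_eq_self φ z,
      integral_indicator hS]
    ring
  have hnormI : ‖∫ x in S, f x‖ ≤ (1/2) * ∫ x, ‖g x‖ := by
    have h1 : ‖∫ x, g x‖ ≤ ∫ x, ‖g x‖ := norm_integral_le_integral_norm g
    rw [hIg] at h1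
    rw [norm_mul] at h1
    have h2 : ‖(2:ℂ)‖ = 2 := by norm_num
    rw [h2] at h1
    linarith
  set Kd : E → ℂ := S.indicator K with hKddef
  have hfe : ∀ y : E, f y = K y * e y := fun _ => rfl
  have hφe : ∀ y : E, φ y = Kd y * e y := by
    intro y
    rw [hφdef, hKddef]
    by_cases hy : y ∈ S
    · rw [Set.indicator_of_mem hy, Set.indicator_of_mem hy, hfe]
    · rw [Set.indicator_of_notMem hy, Set.indicator_of_notMem hy, zero_mul]
  have hgnorm : ∀ x : E, ‖g x‖ = ‖Kd x - Kd (x + z)‖ := by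
    intro x
    have h1 : g x = (Kd x - Kd (x + z)) * e x := by
      rw [hgdef]
      simp only [hφe, heshift x]
      ring
    rw [h1, norm_mul, henorm, mul_one]
  -- main quantities
  set δ : ℝ := ‖z‖ / P with hδdef
  set W : ℝ := (2 / Real.log 2) * (Real.sqrt (ω r⁻¹) * D) with hWdef
  set a : ℝ := 2 * C_K / P ^ n * ((n : ℝ) * (2 * P) ^ m * (2 * ‖z‖)) with hadef
  set b : ℝ := W * 4 ^ n with hbdef
  have hW0 : 0 ≤ W := by
    apply mul_nonneg (by positivity)
    exact mul_nonneg (Real.sqrt_nonneg _) hD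
  have ha0 : 0 ≤ a := by
    rw [hadef]
    positivity
  have key : ∫ x, ‖g x‖ ≤ (a + b) * V := by
    set R : ℝ := P + ‖z‖ with hRdef
    set ℓ : ℝ := P - ‖z‖ with hℓdef
    have hR0 : 0 < R := by rw [hRdef]; linarith
    have hℓ0 : 0 < ℓ := by rw [hℓdef]; linarith
    have hℓR : ℓ ≤ R := by rw [hRdef, hℓdef]; linarith
    have hRP : R ≤ 2 * P := by rw [hRdef]; linarith
    have hPR : P < R := by rw [hRdef]; linarith
    set A : Set E := (fun x : E => ‖x‖) ⁻¹' Set.Ioc ℓ R with hAdef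
    set Bj : ℕ → Set E := fun j => (fun x : E => ‖x‖) ⁻¹' Set.Ioc (R * 2 ^ j) (R * 2 ^ (j+1))
      with hBjdef
    have hA : MeasurableSet A := measurable_norm measurableSet_Ioc
    have hBm : ∀ j, MeasurableSet (Bj j) := fun j => measurable_norm measurableSet_Ioc
    set cA : ℝ≥0∞ := ENNReal.ofReal (2 * C_K / P ^ n) with hcAdef
    set cB : ℕ → ℝ≥0∞ := fun j => ENNReal.ofReal (ω (δ * 2⁻¹ ^ j) / (P * 2 ^ j) ^ n) with hcBdef
    set Ψ : E → ℝ≥0∞ := fun x => A.indicator (fun _ => cA) x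
      + ∑' j, (Bj j).indicator (fun _ => cB j) x with hΨdef
    have hb0 : 0 ≤ b := mul_nonneg hW0 (by positivity)
    -- uniform bound on the truncated kernel
    have hKd : ∀ y : E, ‖Kd y‖ ≤ C_K / P ^ n := by
      intro y
      rw [hKddef]
      by_cases hy : y ∈ S
      · rw [Set.indicator_of_mem hy]
        have hyP : P < ‖y‖ := hy
        have hy0 : y ≠ 0 := by
          intro h0; rw [h0, norm_zero] at hyP; linarith
        refine le_trans (hsize y hy0) ?_
        gcongr
      · rw [Set.indicator_of_notMem hy, norm_zero]
        positivity
    -- dyadic localization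
    have hex : ∀ x : E, R < ‖x‖ → ∃ j : ℕ, R * 2 ^ j < ‖x‖ ∧ ‖x‖ ≤ R * 2 ^ (j+1) := by
      intro x hx
      have hgrow : ∃ j : ℕ, ‖x‖ ≤ R * 2 ^ (j+1) := by
        obtain ⟨j, hj⟩ := pow_unbounded_of_one_lt (‖x‖ / R) (one_lt_two)
        refine ⟨j, ?_⟩
        rw [div_lt_iff₀ hR0] at hj
        have h2 : (2:ℝ) ^ j ≤ 2 ^ (j+1) := by
          rw [pow_succ]; nlinarith [pow_pos (show (0:ℝ) < 2 by norm_num) j]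
        nlinarith
      refine ⟨Nat.find hgrow, ?_, Nat.find_spec hgrow⟩
      rcases Nat.eq_zero_or_pos (Nat.find hgrow) with h0 | hpos
      · rw [h0]; simpa using hx
      · obtain ⟨i, hi⟩ := Nat.exists_eq_add_of_lt hpos
        have hmin := Nat.find_min hgrow (show i < Nat.find hgrow by omega)
        push_neg at hmin
        have : Nat.find hgrow = i + 1 := by omega
        rw [this]
        exact hmin
    -- pointwise majorization
    have hmaj : ∀ x : E, ENNReal.ofReal ‖g x‖ ≤ Ψ x := by
      intro x
      by_cases hxR : R < ‖x‖
      · obtain ⟨j, hj1, hj2⟩ := hex x hxR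
        have h2j : (1:ℝ) ≤ 2 ^ j := one_le_pow₀ (by norm_num)
        have hxP : P < ‖x‖ := by nlinarith
        have hx0 : x ≠ 0 := fun h0 => by rw [h0, norm_zero] at hxP; linarith
        have hxS : x ∈ S := hxP
        have hxz_norm : ‖x‖ - ‖z‖ ≤ ‖x + z‖ := by
          have h := norm_add_le (x + z) (-z)
          simp only [add_neg_cancel_right, norm_neg] at h
          linarith
        have hxzS : (x + z) ∈ S := by
          show P < ‖x + z‖
          have hRj : R ≤ R * 2 ^ j := by nlinarith
          have hPR2 : P = R - ‖z‖ := by rw [hRdef]; ring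
          rw [hPR2]
          linarith
        have hsm : ‖K (x + z) - K x‖ ≤ ω (‖z‖ / ‖x‖) / ‖x‖ ^ n := by
          have h := hsmooth x (-z) hx0 (by rw [norm_neg]; linarith)
          rw [sub_neg_eq_add, norm_neg] at h
          exact h
        have hKdx : Kd x = K x := Set.indicator_of_mem hxS K
        have hKdxz : Kd (x + z) = K (x + z) := Set.indicator_of_mem hxzS K
        have hgx : ‖g x‖ ≤ ω (δ * 2⁻¹ ^ j) / (P * 2 ^ j) ^ n := by
          rw [hgnorm x, hKdx, hKdxz, norm_sub_rev]
          refine le_trans hsm ?_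
          have hP2j : (0:ℝ) < P * 2 ^ j := by positivity
          have hxbig : P * 2 ^ j ≤ ‖x‖ := by nlinarith
          have harg : ‖z‖ / ‖x‖ ≤ δ * 2⁻¹ ^ j := by
            have : δ * 2⁻¹ ^ j = ‖z‖ / (P * 2 ^ j) := by
              rw [hδdef, inv_pow]
              field_simp
            rw [this]
            gcongr
          have hω_le : ω (‖z‖ / ‖x‖) ≤ ω (δ * 2⁻¹ ^ j) :=
            hmono _ _ (div_nonneg hz0.le (norm_nonneg x)) harg
          have hω_nn : 0 ≤ ω (‖z‖ / ‖x‖) := hω0 _ (div_nonneg hz0.le (norm_nonneg x))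
          gcongr
          exact le_trans hω_nn hω_le
        have hmem : x ∈ Bj j := ⟨hj1, hj2⟩
        calc ENNReal.ofReal ‖g x‖ ≤ cB j := ENNReal.ofReal_le_ofReal hgx
          _ = (Bj j).indicator (fun _ => cB j) x := (Set.indicator_of_mem hmem (fun _ => cB j)).symm
          _ ≤ ∑' i, (Bj i).indicator (fun _ => cB i) x := ENNReal.le_tsum j
          _ ≤ Ψ x := le_add_self
      · by_cases hxl : ℓ < ‖x‖
        · have hmem : x ∈ A := ⟨hxl, not_lt.mp hxR⟩
          have hgx : ‖g x‖ ≤ 2 * C_K / P ^ n := by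
            rw [hgnorm x]
            refine le_trans (norm_sub_le _ _) ?_
            have h1 := hKd x
            have h2 := hKd (x + z)
            have : 2 * C_K / P ^ n = C_K / P ^ n + C_K / P ^ n := by ring
            rw [this]
            linarith
          calc ENNReal.ofReal ‖g x‖ ≤ cA := ENNReal.ofReal_le_ofReal hgx
            _ = A.indicator (fun _ => cA) x := (Set.indicator_of_mem hmem (fun _ => cA)).symm
            _ ≤ Ψ x := le_self_add
        · have hxS : x ∉ S := by
            show ¬ P < ‖x‖
            push_neg at hxl ⊢
            rw [hℓdef] at hxl
            linarith
          have hxzS : (x + z) ∉ S := by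
            show ¬ P < ‖x + z‖
            push_neg at hxl ⊢
            refine le_trans (norm_add_le x z) ?_
            rw [hℓdef] at hxl
            linarith
          have : ‖g x‖ = 0 := by
            rw [hgnorm x, hKddef, Set.indicator_of_notMem hxS,
              Set.indicator_of_notMem hxzS, sub_zero, norm_zero]
          rw [this]
          simp
    -- lintegral of the majorant
    have hvol_ball : ∀ s : ℝ, 0 ≤ s →
        volume (Metric.closedBall (0:E) s) = ENNReal.ofReal (s ^ n) * v := by
      intro s hs
      rw [hvdef, Measure.addHaar_closedBall volume 0 hs, finrank_euclideanSpace_fin]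
    have hvolA : volume A ≤ ENNReal.ofReal (R ^ n - ℓ ^ n) * v := by
      have hsub : A ⊆ Metric.closedBall 0 R \ Metric.closedBall 0 ℓ := by
        intro x hx
        constructor
        · rw [Metric.mem_closedBall, dist_zero_right]; exact hx.2
        · rw [Metric.mem_closedBall, dist_zero_right]; push_neg
          exact hx.1
      refine le_trans (measure_mono hsub) ?_
      rw [measure_diff (Metric.closedBall_subset_closedBall hℓR)
        measurableSet_closedBall.nullMeasurableSet measure_closedBall_lt_top.ne]
      rw [hvol_ball R hR0.le, hvol_ball ℓ hℓ0.le]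
      have hsum : ENNReal.ofReal (R ^ n) * v
          = ENNReal.ofReal (R ^ n - ℓ ^ n) * v + ENNReal.ofReal (ℓ ^ n) * v := by
        rw [← add_mul, ← ENNReal.ofReal_add (by nlinarith [pow_le_pow_left₀ hℓ0.le hℓR n])
          (by positivity)]
        congr 2
        ring
      rw [hsum]
      exact tsub_le_iff_right.mpr le_rfl
    have htermA : cA * volume A ≤ ENNReal.ofReal a * v := by
      refine le_trans (mul_le_mul_right hvolA cA) ?_
      rw [hcAdef, ← mul_assoc, ← ENNReal.ofReal_mul (by positivity)]
      refine mul_le_mul_left (ENNReal.ofReal_le_ofReal ?_) v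
      rw [hadef]
      have h1 : R ^ n - ℓ ^ n ≤ (n:ℝ) * (2 * P) ^ m * (2 * ‖z‖) := by
        have h2 := pow_sub_pow_le' R ℓ hℓ0.le hℓR m
        have h3 : R - ℓ = 2 * ‖z‖ := by rw [hRdef, hℓdef]; ring
        rw [h3] at h2
        have h4 : R ^ m ≤ (2 * P) ^ m := pow_le_pow_left₀ hR0.le hRP m
        have h5 : ((m:ℝ) + 1) * R ^ m * (2 * ‖z‖) ≤ ((m:ℝ) + 1) * (2 * P) ^ m * (2 * ‖z‖) := by
          refine mul_le_mul_of_nonneg_right (mul_le_mul_of_nonneg_left h4 ?_) (by positivity)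
          positivity
        have hcast : ((n:ℝ)) = (m:ℝ) + 1 := by rw [show n = m + 1 from rfl]; push_cast; ring
        rw [hcast]
        calc R ^ n - ℓ ^ n = R ^ (m+1) - ℓ ^ (m+1) := rfl
          _ ≤ ((m:ℝ) + 1) * R ^ m * (2 * ‖z‖) := h2
          _ ≤ ((m:ℝ) + 1) * (2 * P) ^ m * (2 * ‖z‖) := h5
      have hcA0 : (0:ℝ) ≤ 2 * C_K / P ^ n := by positivity
      exact mul_le_mul_of_nonneg_left h1 hcA0
    have htermB : ∀ j : ℕ, cB j * volume (Bj j)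
        ≤ ENNReal.ofReal (ω (δ * 2⁻¹ ^ j) * 4 ^ n) * v := by
      intro j
      have hsub : Bj j ⊆ Metric.closedBall 0 (R * 2 ^ (j+1)) := by
        intro x hx
        rw [Metric.mem_closedBall, dist_zero_right]
        exact hx.2
      have hvolB : volume (Bj j) ≤ ENNReal.ofReal ((R * 2 ^ (j+1)) ^ n) * v := by
        refine le_trans (measure_mono hsub) ?_
        rw [hvol_ball _ (mul_nonneg hR0.le (by positivity))]
      have hωj : 0 ≤ ω (δ * 2⁻¹ ^ j) := hω0 _ (by positivity)
      refine le_trans (mul_le_mul_right hvolB (cB j)) ?_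
      rw [hcBdef, ← mul_assoc, ← ENNReal.ofReal_mul (div_nonneg hωj (by positivity))]
      refine mul_le_mul_left (ENNReal.ofReal_le_ofReal ?_) v
      have hre : ω (δ * 2⁻¹ ^ j) / (P * 2 ^ j) ^ n * (R * 2 ^ (j+1)) ^ n
          = ω (δ * 2⁻¹ ^ j) * (R * 2 ^ (j+1) / (P * 2 ^ j)) ^ n := by
        rw [div_pow]
        ring
      rw [hre]
      refine mul_le_mul_of_nonneg_left ?_ hωj
      have hratio : R * 2 ^ (j+1) / (P * 2 ^ j) ≤ 4 := by
        rw [div_le_iff₀ (by positivity)]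
        rw [pow_succ]
        nlinarith [pow_pos (show (0:ℝ) < 2 by norm_num) j]
      refine le_trans (pow_le_pow_left₀ (by positivity) hratio n) ?_
      norm_num
    -- sum the series
    have hδ0 : 0 < δ := by rw [hδdef]; positivity
    have hδr : δ ≤ r⁻¹ := by
      have hz2 : δ = (2 * r)⁻¹ := by
        rw [hδdef, hznorm, hrdef]
        field_simp
      rw [hz2]
      have : (0:ℝ) < 2 * r := by linarith
      rw [inv_le_inv₀ this hr0]  -- maybe wrong name
      linarith
    have hr1 : r⁻¹ < 1 := by
      rw [inv_lt_one_iff₀]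
      right; exact hr
    have hsum_le : (∑' j, ENNReal.ofReal (ω (δ * 2⁻¹ ^ j) * 4 ^ n))
        ≤ ENNReal.ofReal b := by
      refine Summable.tsum_le_of_sum_le ENNReal.summable ?_
      intro s
      obtain ⟨N, hsN⟩ := s.exists_nat_subset_range
      refine le_trans (Finset.sum_le_sum_of_subset hsN) ?_
      rw [← ENNReal.ofReal_sum_of_nonneg
        (fun i _ => mul_nonneg (hω0 _ (by positivity)) (by positivity))]
      apply ENNReal.ofReal_le_ofReal
      rw [← Finset.sum_mul, hbdef]
      refine mul_le_mul_of_nonneg_right ?_ (by positivity)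
      rw [hWdef, hDdef]
      exact series_bound ω hω0 hmono hsub2 hint hints δ r⁻¹ hδ0 hδr hr1 N
    -- assemble the lintegral bound
    have hΨint : ∫⁻ x, Ψ x ≤ ENNReal.ofReal (a + b) * v := by
      have h1 : ∫⁻ x, A.indicator (fun _ => cA) x = cA * volume A := by
        rw [lintegral_indicator hA, setLIntegral_const]
      have h2 : ∫⁻ x, ∑' j, (Bj j).indicator (fun _ => cB j) x
          = ∑' j, cB j * volume (Bj j) := by
        rw [lintegral_tsum (fun j => (measurable_const.indicator (hBm j)).aemeasurable)]
        exact tsum_congr fun j => by rw [lintegral_indicator (hBm j), setLIntegral_const]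
      calc ∫⁻ x, Ψ x = cA * volume A + ∑' j, cB j * volume (Bj j) := by
            rw [hΨdef, lintegral_add_left (measurable_const.indicator hA), h1, h2]
        _ ≤ ENNReal.ofReal a * v + ∑' j, ENNReal.ofReal (ω (δ * 2⁻¹ ^ j) * 4 ^ n) * v :=
            add_le_add htermA (ENNReal.tsum_le_tsum htermB)
        _ = ENNReal.ofReal a * v + (∑' j, ENNReal.ofReal (ω (δ * 2⁻¹ ^ j) * 4 ^ n)) * v := by
            rw [ENNReal.tsum_mul_right]
        _ ≤ ENNReal.ofReal a * v + ENNReal.ofReal b * v := by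
            exact add_le_add le_rfl (mul_le_mul_left hsum_le v)
        _ = ENNReal.ofReal (a + b) * v := by
            rw [ENNReal.ofReal_add ha0 hb0, add_mul]
    have h0 : ENNReal.ofReal (∫ x, ‖g x‖) ≤ ENNReal.ofReal ((a + b) * V) := by
      rw [ofReal_integral_norm_eq_lintegral_enorm hg]
      have hm : ∫⁻ x, (‖g x‖₊ : ℝ≥0∞) ≤ ∫⁻ x, Ψ x := by
        refine lintegral_mono fun x => ?_
        rw [← enorm_eq_nnnorm, ← ofReal_norm_eq_enorm]
        exact hmaj x
      refine le_trans hm (le_trans hΨint ?_)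
      rw [show v = ENNReal.ofReal V from (ENNReal.ofReal_toReal hvfin).symm,
        ← ENNReal.ofReal_mul (by linarith)]
    exact (ENNReal.ofReal_le_ofReal_iff (by nlinarith)).mp h0
  -- final arithmetic
  have hfin : (1/2) * ((a + b) * V) ≤ c * (C_K * r⁻¹ + D * Real.sqrt (ω r⁻¹)) := by
    have hlog23 : 2 / Real.log 2 ≤ 3 := by
      rw [div_le_iff₀ (Real.log_pos (by norm_num))]
      nlinarith [Real.log_two_gt_d9]
    set u : ℝ := C_K * r⁻¹ with hudef
    set w : ℝ := D * Real.sqrt (ω r⁻¹) with hwdef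
    have hu0 : 0 ≤ u := mul_nonneg hCK.le (by positivity)
    have hw0 : 0 ≤ w := mul_nonneg hD (Real.sqrt_nonneg _)
    have hq0 : (0:ℝ) < 4 ^ n := by positivity
    have hp0 : (0:ℝ) ≤ (n:ℝ) * 2 ^ n := by positivity
    -- a ≤ 2^n * n * u
    have hau : a ≤ (n:ℝ) * 2 ^ n * u := by
      rw [hadef, hudef]
      have hz2 : ‖z‖ / P = (2 * r)⁻¹ := by
        rw [hznorm, hrdef]
        field_simp
      have hexp : 2 * C_K / P ^ n * ((n : ℝ) * (2 * P) ^ m * (2 * ‖z‖))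
          = (n:ℝ) * 2 ^ n * (C_K * (2 * (‖z‖ / P))) := by
        have hPn : P ^ n = P ^ m * P := by rw [pow_succ]
        have h2n : (2:ℝ) ^ n = 2 ^ m * 2 := by rw [pow_succ]
        rw [hPn, h2n, mul_pow]
        field_simp
      rw [hexp, hz2]
      have : C_K * (2 * (2 * r)⁻¹) = C_K * r⁻¹ := by
        field_simp
      rw [this]
    have hbw : b ≤ 3 * w * 4 ^ n := by
      rw [hbdef, hWdef, hwdef]
      have : Real.sqrt (ω r⁻¹) * D = D * Real.sqrt (ω r⁻¹) := mul_comm _ _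
      rw [this]
      apply mul_le_mul_of_nonneg_right _ hq0.le
      exact mul_le_mul_of_nonneg_right hlog23 (mul_nonneg hD (Real.sqrt_nonneg _))
    have hcu : c = (V + 1) * ((n : ℝ) * 2 ^ n + 4 ^ n * 4) := hcdef
    nlinarith [mul_nonneg (mul_nonneg hV0 hp0) hu0, mul_nonneg hp0 hu0,
      mul_nonneg (mul_nonneg hV0 hq0.le) hw0, mul_nonneg hq0.le hw0,
      mul_nonneg hp0 hw0, mul_nonneg hq0.le hu0,
      mul_nonneg (mul_nonneg hV0 hq0.le) hu0, mul_nonneg (mul_nonneg hV0 hp0) hw0,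
      mul_le_mul_of_nonneg_left hau hV0, mul_le_mul_of_nonneg_left hbw hV0]
  calc ‖∫ x in S, f x‖ ≤ (1/2) * ∫ x, ‖g x‖ := hnormI
    _ ≤ (1/2) * ((a + b) * V) := by linarith
    _ ≤ c * (C_K * r⁻¹ + D * Real.sqrt (ω r⁻¹)) := hfin


end
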